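/- The matrix exponential map exp : Sym(n) → SPD(n) is a bijection from the space of symmetric real n×n matrices onto the set of symmetric positive-definite real n×n matrices. -/

import Mathlib

open Matrix

namespace ExpBijAux

lemma units_conj_pow {M : Type*} [Monoid M] (u : Mˣ) (x : M) (k : ℕ) :
    ((u : M) * x * (↑u⁻¹ : M)) ^ k = (u : M) * x ^ k * (↑u⁻¹ : M) := by
  induction k with
  | zero => simp
  | succ k ih =>
      have h : (↑u⁻¹ : M) * ((u : M) * x * (↑u⁻¹ : M)) = x * (↑u⁻¹ : M) := by
        rw [← mul_assoc, ← mul_assoc, u.inv_mul, one_mul]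
      rw [pow_succ, pow_succ, ih, mul_assoc ((u : M) * x ^ k), h]
      simp only [mul_assoc]

variable {n : ℕ}

local notation "Mn" => Matrix (Fin n) (Fin n) ℝ

lemma aeval_units_conj (u : (Mn)ˣ) (x : Mn) (p : Polynomial ℝ) :
    Polynomial.aeval ((u : Mn) * x * (↑u⁻¹ : Mn)) p
      = (u : Mn) * Polynomial.aeval x p * (↑u⁻¹ : Mn) := by
  induction p using Polynomial.induction_on' with
  | add p q hp hq => simp only [map_add, hp, hq, mul_add, add_mul]
  | monomial k r =>
      rw [Polynomial.aeval_monomial, Polynomial.aeval_monomial, units_conj_pow]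
      simp only [← mul_assoc]
      rw [Algebra.commutes]

lemma aeval_diagonal (d : Fin n → ℝ) (p : Polynomial ℝ) :
    Polynomial.aeval (diagonal d) p = diagonal (fun i => p.eval (d i)) := by
  have h := Polynomial.aeval_algHom_apply
    (Matrix.diagonalAlgHom ℝ : (Fin n → ℝ) →ₐ[ℝ] Matrix (Fin n) (Fin n) ℝ) d p
  simp only [Matrix.diagonalAlgHom_apply] at h
  rw [h]
  have h2 : (Polynomial.aeval d) p = fun i => p.eval (d i) := by
    funext i
    rw [Polynomial.aeval_fn_apply, Polynomial.aeval_def, Polynomial.eval₂_eq_eval_map]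
    simp [Algebra.algebraMap_self]
  rw [h2]

/-- Spectral decomposition of a hermitian real matrix, with a `Units` form. -/
lemma herm_decomp {A : Mn} (hA : A.IsHermitian) :
    ∃ u : (Mn)ˣ, (↑u⁻¹ : Mn) = star (u : Mn) ∧
      A = (u : Mn) * diagonal hA.eigenvalues * (↑u⁻¹ : Mn) := by
  set U : Mn := (hA.eigenvectorUnitary : Mn) with hU
  have hmem : U ∈ Matrix.unitaryGroup (Fin n) ℝ := hA.eigenvectorUnitary.2
  have h1 : U * star U = 1 := (Matrix.mem_unitaryGroup_iff).mp hmem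
  have h2 : star U * U = 1 := (Matrix.mem_unitaryGroup_iff').mp hmem
  refine ⟨⟨U, star U, h1, h2⟩, rfl, ?_⟩
  have := hA.spectral_theorem
  simpa [RCLike.ofReal_real_eq_id] using this

lemma exp_units_conj_diag (u : (Mn)ˣ) (d : Fin n → ℝ) :
    NormedSpace.exp ((u : Mn) * diagonal d * (↑u⁻¹ : Mn))
      = (u : Mn) * diagonal (fun i => Real.exp (d i)) * (↑u⁻¹ : Mn) := by
  rw [Matrix.exp_units_conj, Matrix.exp_diagonal]
  congr 2
  funext i
  rw [Pi.exp_def, ← Real.exp_eq_exp_ℝ]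

/-- Key: applying a polynomial that inverts `exp` on the eigenvalues recovers `A`. -/
lemma aeval_exp {A : Mn} (hA : A.IsHermitian) (p : Polynomial ℝ)
    (hp : ∀ i, p.eval (Real.exp (hA.eigenvalues i)) = hA.eigenvalues i) :
    Polynomial.aeval (NormedSpace.exp A) p = A := by
  obtain ⟨u, hui, hdecomp⟩ := herm_decomp hA
  conv_lhs => rw [hdecomp]
  rw [exp_units_conj_diag, aeval_units_conj, aeval_diagonal]
  have hfun : (fun i => p.eval (Real.exp (hA.eigenvalues i))) = hA.eigenvalues := funext hp
  rw [hfun, ← hdecomp]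

lemma posDef_conj (u : (Mn)ˣ) (hui : (↑u⁻¹ : Mn) = star (u : Mn)) {d : Fin n → ℝ}
    (hd : ∀ i, 0 < d i) : ((u : Mn) * diagonal d * (↑u⁻¹ : Mn)).PosDef := by
  have hD : (diagonal d).PosDef := Matrix.PosDef.diagonal hd
  rw [hui]
  rw [posDef_iff_dotProduct_mulVec]
  constructor
  · have h := Matrix.isHermitian_conjTranspose_mul_mul (star (u : Mn)) hD.1
    simpa [Matrix.star_eq_conjTranspose, Matrix.conjTranspose_conjTranspose] using h
  · intro x hx
    have hy : (star (u : Mn)) *ᵥ x ≠ 0 := by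
      intro h0
      apply hx
      have hxx : (u : Mn) *ᵥ ((star (u : Mn)) *ᵥ x) = x := by
        rw [mulVec_mulVec, ← hui, u.mul_inv, one_mulVec]
      rw [h0, mulVec_zero] at hxx
      exact hxx.symm
    have key : star x ⬝ᵥ ((u : Mn) * diagonal d * star (u : Mn)) *ᵥ x
        = star ((star (u : Mn)) *ᵥ x) ⬝ᵥ (diagonal d) *ᵥ ((star (u : Mn)) *ᵥ x) := by
      rw [star_mulVec, ← mulVec_mulVec, ← mulVec_mulVec, dotProduct_mulVec (star x)]
      simp [Matrix.star_eq_conjTranspose, Matrix.conjTranspose_conjTranspose]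
    rw [key]
    exact hD.dotProduct_mulVec_pos hy

end ExpBijAux

open ExpBijAux in
/-- The matrix exponential is a bijection from the space of real symmetric
`n×n` matrices onto the set of symmetric positive-definite matrices. -/
theorem exp_bijOn_spd (n : ℕ) :
    Set.BijOn (NormedSpace.exp)
      {A : Matrix (Fin n) (Fin n) ℝ | Aᵀ = A}
      {x : Matrix (Fin n) (Fin n) ℝ | x.PosDef} := by
  have hherm : ∀ {A : Matrix (Fin n) (Fin n) ℝ}, Aᵀ = A → A.IsHermitian := fun h => by
    rwa [Matrix.IsHermitian, Matrix.conjTranspose_eq_transpose_of_trivial]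
  refine ⟨?_, ?_, ?_⟩
  · -- MapsTo
    intro A hA
    have hA' : A.IsHermitian := hherm hA
    obtain ⟨u, hui, hdecomp⟩ := herm_decomp hA'
    show (NormedSpace.exp A).PosDef
    have hexp : NormedSpace.exp A
        = (u : Matrix (Fin n) (Fin n) ℝ) * diagonal (fun i => Real.exp (hA'.eigenvalues i))
          * (↑u⁻¹ : Matrix (Fin n) (Fin n) ℝ) := by
      conv_lhs => rw [hdecomp]
      exact exp_units_conj_diag u _
    rw [hexp]
    exact posDef_conj u hui fun i => Real.exp_pos _
  · -- InjOn
    intro A hA B hB hAB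
    have hA' : A.IsHermitian := hherm hA
    have hB' : B.IsHermitian := hherm hB
    classical
    set s : Finset ℝ :=
      (Finset.image (fun i => Real.exp (hA'.eigenvalues i)) Finset.univ) ∪
      (Finset.image (fun i => Real.exp (hB'.eigenvalues i)) Finset.univ) with hs
    set p : Polynomial ℝ := Lagrange.interpolate s id Real.log with hpdef
    have hnode : ∀ x ∈ s, p.eval x = Real.log x := by
      intro x hx
      have := Lagrange.eval_interpolate_at_node Real.log (Set.injOn_id _) hx
      simpa [hpdef] using this
    have hpA : ∀ i, p.eval (Real.exp (hA'.eigenvalues i)) = hA'.eigenvalues i := fun i => by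
      rw [hnode _ (by simp [hs]), Real.log_exp]
    have hpB : ∀ i, p.eval (Real.exp (hB'.eigenvalues i)) = hB'.eigenvalues i := fun i => by
      rw [hnode _ (by simp [hs]), Real.log_exp]
    calc A = Polynomial.aeval (NormedSpace.exp A) p := (aeval_exp hA' p hpA).symm
    _ = Polynomial.aeval (NormedSpace.exp B) p := by rw [hAB]
    _ = B := aeval_exp hB' p hpB
  · -- SurjOn
    intro X hX
    have hX' : X.PosDef := hX
    obtain ⟨u, hui, hdecomp⟩ := herm_decomp hX'.1
    refine ⟨(u : Matrix (Fin n) (Fin n) ℝ) * diagonal (fun i => Real.log (hX'.1.eigenvalues i))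
      * (↑u⁻¹ : Matrix (Fin n) (Fin n) ℝ), ?_, ?_⟩
    · have hH : ((u : Matrix (Fin n) (Fin n) ℝ)
          * diagonal (fun i => Real.log (hX'.1.eigenvalues i))
          * (↑u⁻¹ : Matrix (Fin n) (Fin n) ℝ)).IsHermitian := by
        rw [hui]
        have h := Matrix.isHermitian_conjTranspose_mul_mul (star (u : Matrix (Fin n) (Fin n) ℝ))
          (Matrix.isHermitian_diagonal (fun i => Real.log (hX'.1.eigenvalues i)))
        simpa [Matrix.star_eq_conjTranspose, Matrix.conjTranspose_conjTranspose] using h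
      show _ᵀ = _
      rw [← Matrix.conjTranspose_eq_transpose_of_trivial]
      exact hH
    · rw [exp_units_conj_diag]
      have hfun : (fun i => Real.exp (Real.log (hX'.1.eigenvalues i))) = hX'.1.eigenvalues :=
        funext fun i => Real.exp_log (hX'.eigenvalues_pos i)
      rw [hfun, ← hdecomp]
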